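/- Let L ⊆ L' be a finite extension of fields of characteristic p, and suppose the degree [L : L^p] is finite. Then [L' : L'^p] = [L : L^p]. -/
import Mathlib


set_option maxHeartbeats 1600000 in
/-- Let `L ⊆ L'` be a finite extension of fields of characteristic `p`, and suppose the degree
`[L : L^p]` is finite.  Then `[L' : L'^p] = [L : L^p]`, where `K^p` denotes the subfield of `p`-th
powers of a field `K` of characteristic `p`. -/
theorem finrank_over_frobenius_range_invariant
    (p : ℕ) [Fact p.Prime] (L L' : Type*) [Field L] [Field L'] [Algebra L L']
    [FiniteDimensional L L'] [CharP L p] [CharP L' p]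
    (Lp : Subfield L) (L'p : Subfield L')
    (hLp : Lp = (frobenius L p).fieldRange)
    (hL'p : L'p = (frobenius L' p).fieldRange)
    (hfin : FiniteDimensional Lp L) :
    Module.finrank L'p L' = Module.finrank Lp L := by
  classical
  set i : L →+* L' := algebraMap L L' with hi
  set A : Subfield L' := Lp.map i with hA
  set B : Subfield L' := i.fieldRange with hB
  -- A ≤ B
  have hAB : A ≤ B := by
    rintro x hx
    obtain ⟨y, -, rfl⟩ := Subfield.mem_map.mp hx
    exact ⟨y, rfl⟩
  -- A ≤ L'p
  have hAP : A ≤ L'p := by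
    rintro x hx
    obtain ⟨y, hy, rfl⟩ := Subfield.mem_map.mp hx
    rw [hLp] at hy
    obtain ⟨z, rfl⟩ := RingHom.mem_fieldRange.mp hy
    rw [hL'p]
    exact ⟨i z, (i.map_frobenius p z).symm⟩
  -- algebra structures along inclusions
  letI : Algebra A B := (Subfield.inclusion hAB).toAlgebra
  letI : Algebra A L'p := (Subfield.inclusion hAP).toAlgebra
  haveI : IsScalarTower A B L' := IsScalarTower.of_algebraMap_eq fun x => rfl
  haveI : IsScalarTower A L'p L' := IsScalarTower.of_algebraMap_eq fun x => rfl
  -- the equiv `L ≃+* B`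
  have hj2 : Function.Bijective (i.codRestrict B fun x => ⟨x, rfl⟩) := by
    constructor
    · intro x y h
      exact i.injective (congrArg Subtype.val h)
    · rintro ⟨-, x, rfl⟩
      exact ⟨x, rfl⟩
  let j2 : L ≃+* B := RingEquiv.ofBijective _ hj2
  -- the equiv `Lp ≃+* A`
  have hi2 : Function.Bijective ((i.comp Lp.subtype).codRestrict A
      fun x => Subfield.mem_map.mpr ⟨x.1, x.2, rfl⟩) := by
    constructor
    · intro x y h
      exact Subtype.ext (i.injective (congrArg Subtype.val h))
    · rintro ⟨-, hx⟩
      obtain ⟨y, hy, rfl⟩ := Subfield.mem_map.mp hx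
      exact ⟨⟨y, hy⟩, rfl⟩
  let i2 : Lp ≃+* A := RingEquiv.ofBijective _ hi2
  -- the equiv `L' ≃+* L'p` given by Frobenius
  have hmem : ∀ x : L', frobenius L' p x ∈ L'p := fun x => by
    rw [hL'p]; exact ⟨x, rfl⟩
  have hj1 : Function.Bijective ((frobenius L' p).codRestrict L'p hmem) := by
    constructor
    · intro x y h
      exact frobenius_inj L' p (congrArg Subtype.val h)
    · rintro ⟨x, hx⟩
      rw [hL'p] at hx
      obtain ⟨y, rfl⟩ := RingHom.mem_fieldRange.mp hx
      exact ⟨y, rfl⟩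
  let j1 : L' ≃+* L'p := RingEquiv.ofBijective _ hj1
  -- the equiv `B ≃+* A` given by Frobenius
  have hmem' : ∀ x : B, (frobenius L' p).comp B.subtype x ∈ A := by
    rintro ⟨-, x, rfl⟩
    exact Subfield.mem_map.mpr ⟨frobenius L p x, by rw [hLp]; exact ⟨x, rfl⟩,
      (i.map_frobenius p x)⟩
  have hi1 : Function.Bijective (((frobenius L' p).comp B.subtype).codRestrict A hmem') := by
    constructor
    · intro x y h
      exact Subtype.ext (frobenius_inj L' p (congrArg Subtype.val h))
    · rintro ⟨-, hx⟩
      obtain ⟨y, hy, rfl⟩ := Subfield.mem_map.mp hx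
      rw [hLp] at hy
      obtain ⟨z, rfl⟩ := RingHom.mem_fieldRange.mp hy
      exact ⟨⟨i z, z, rfl⟩, Subtype.ext (i.map_frobenius p z).symm⟩
  let i1 : B ≃+* A := RingEquiv.ofBijective _ hi1
  -- rank equalities
  have e1 := Algebra.lift_rank_eq_of_equiv_equiv i2 j2 (RingHom.ext fun x => Subtype.ext rfl)
  have e2 : Module.rank L L' = Module.rank B L' :=
    Algebra.rank_eq_of_equiv_equiv j2 (RingEquiv.refl L') (RingHom.ext fun x => rfl)
  have e3 : Module.rank B L' = Module.rank A L'p :=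
    Algebra.rank_eq_of_equiv_equiv i1 j1 (RingHom.ext fun x => Subtype.ext rfl)
  have f1 : Module.finrank Lp L = Module.finrank A B := by
    have := congrArg Cardinal.toNat e1
    simpa [Module.finrank] using this
  have f2 : Module.finrank L L' = Module.finrank B L' := congrArg Cardinal.toNat e2
  have f3 : Module.finrank B L' = Module.finrank A L'p := congrArg Cardinal.toNat e3
  -- tower laws
  have t1 : Module.finrank A B * Module.finrank B L' = Module.finrank A L' :=
    Module.finrank_mul_finrank A B L'
  have t2 : Module.finrank A L'p * Module.finrank L'p L' = Module.finrank A L' :=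
    Module.finrank_mul_finrank A L'p L'
  have hpos : 0 < Module.finrank L L' := Module.finrank_pos
  have key : Module.finrank L L' * Module.finrank Lp L
      = Module.finrank L L' * Module.finrank L'p L' := by
    rw [mul_comm, f1, f2, t1, ← t2, ← f3, ← f2]
  exact (Nat.eq_of_mul_eq_mul_left hpos key).symm
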